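/- (Theorem 1, condition ii) Let N ≥ 2 and let E : Fin N → Fin N → Prop, C : Fin N → Fin N → Bool, T : Fin N → Fin N → ℂ with T a j ≠ 0 ↔ E a j, and let Ψ be the postselected coefficient function. If Ψ is genuinely entangled, then the perfect matching diagram of E — the directed graph on Fin N whose arcs are exactly the maximally matchable edges of E — is strongly connected: for any two vertices u, v, there is a directed path from u to v consisting of maximally matchable edges (v lies in the reflexive–transitive closure of the maximally-matchable arc relation starting from u). -/

import Mathlib

open scoped Classical

/-- The postselected (bosonic) coefficient function of an LQN:
`Ψ s = Σ_{σ PM of E with outcome string s} Π_a T a (σ a)`. -/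
noncomputable def lqnPsi {V : Type*} [Fintype V] [DecidableEq V]
    (E : V → V → Prop) (C : V → V → Bool) (T : V → V → ℂ)
    (s : V → Bool) : ℂ :=
  ∑ σ ∈ Finset.univ.filter (fun σ : Equiv.Perm V =>
      (∀ a, E a (σ a)) ∧ ∀ j, C (σ⁻¹ j) j = s j),
    ∏ a, T a (σ a)

/-- Theorem 1, condition ii: If the postselected coefficient function `Ψ`
is genuinely entangled (nonzero and not separable across any bipartition
`∅ ⊊ S ⊊ Fin N`), then the perfect matching diagram — the digraph whose arcs are
exactly the maximally matchable edges of `E` — is strongly connected: every vertex `v`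
lies in the reflexive–transitive closure of the maximally-matchable arc relation
starting from any vertex `u`. -/
theorem lqn_thm1_strongly_connected (N : ℕ) (hN : 2 ≤ N)
    (E : Fin N → Fin N → Prop) (C : Fin N → Fin N → Bool)
    (T : Fin N → Fin N → ℂ) (hT : ∀ a j, T a j ≠ 0 ↔ E a j)
    (hΨ : lqnPsi E C T ≠ 0)
    (hgen : ∀ S : Set (Fin N), S.Nonempty → S ≠ Set.univ →
      ¬ ∃ f g : (Fin N → Bool) → ℂ,
        (∀ s t : Fin N → Bool, (∀ j ∈ S, s j = t j) → f s = f t) ∧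
        (∀ s t : Fin N → Bool, (∀ j ∉ S, s j = t j) → g s = g t) ∧
        ∀ s : Fin N → Bool, lqnPsi E C T s = f s * g s) :
    ∀ u v : Fin N,
      Relation.ReflTransGen
        (fun a j => ∃ σ : Equiv.Perm (Fin N), (∀ x, E x (σ x)) ∧ σ a = j) u v := by
  intro u v
  by_contra hreach
  set R : Fin N → Fin N → Prop :=
    fun a j => ∃ σ : Equiv.Perm (Fin N), (∀ x, E x (σ x)) ∧ σ a = j with hRdef
  set S : Set (Fin N) := {w | Relation.ReflTransGen R u w} with hSdef
  have huS : u ∈ S := Relation.ReflTransGen.refl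
  have hvS : v ∉ S := hreach
  have hclosed : ∀ (σ : Equiv.Perm (Fin N)), (∀ x, E x (σ x)) → ∀ a, a ∈ S → σ a ∈ S :=
    fun σ hσ a ha => Relation.ReflTransGen.tail ha ⟨σ, hσ, rfl⟩
  have hiff : ∀ (σ : Equiv.Perm (Fin N)), (∀ x, E x (σ x)) →
      ∀ a : Fin N, a ∈ S ↔ σ a ∈ S := by
    intro σ hσ
    set F : Finset (Fin N) := Finset.univ.filter (· ∈ S) with hF
    have himg : Finset.image σ F = F := by
      apply Finset.eq_of_subset_of_card_le
      · intro x hx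
        obtain ⟨b, hb, rfl⟩ := Finset.mem_image.mp hx
        simp only [hF, Finset.mem_filter, Finset.mem_univ, true_and] at *
        exact hclosed σ hσ b hb
      · rw [Finset.card_image_of_injective _ σ.injective]
    intro a
    constructor
    · exact hclosed σ hσ a
    · intro ha
      have hmem : σ a ∈ Finset.image σ F := by
        rw [himg]; simp only [hF, Finset.mem_filter, Finset.mem_univ, true_and]; exact ha
      obtain ⟨b, hb, hba⟩ := Finset.mem_image.mp hmem
      have hb' : b = a := σ.injective hba
      subst hb'
      simpa [hF] using hb
  refine hgen S ⟨u, huS⟩ (fun h => hvS (h ▸ Set.mem_univ v)) ?_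
  refine ⟨fun s => ∑ σ₁ ∈ Finset.univ.filter (fun σ₁ : Equiv.Perm {x : Fin N // x ∈ S} =>
        (∀ a : {x : Fin N // x ∈ S}, E a.1 (σ₁ a).1) ∧
        ∀ j : {x : Fin N // x ∈ S}, C (σ₁⁻¹ j).1 j.1 = s j.1),
      ∏ a : {x : Fin N // x ∈ S}, T a.1 (σ₁ a).1,
    fun s => ∑ σ₂ ∈ Finset.univ.filter (fun σ₂ : Equiv.Perm {x : Fin N // ¬ x ∈ S} =>
        (∀ a : {x : Fin N // ¬ x ∈ S}, E a.1 (σ₂ a).1) ∧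
        ∀ j : {x : Fin N // ¬ x ∈ S}, C (σ₂⁻¹ j).1 j.1 = s j.1),
      ∏ a : {x : Fin N // ¬ x ∈ S}, T a.1 (σ₂ a).1,
    ?_, ?_, ?_⟩
  · intro s t hst
    have hst' : ∀ j : {x : Fin N // x ∈ S}, s j.1 = t j.1 := fun j => hst j.1 j.2
    refine Finset.sum_congr ?_ (fun _ _ => rfl)
    apply Finset.filter_congr
    intro σ₁ _
    simp only [hst']
  · intro s t hst
    have hst' : ∀ j : {x : Fin N // ¬ x ∈ S}, s j.1 = t j.1 := fun j => hst j.1 j.2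
    refine Finset.sum_congr ?_ (fun _ _ => rfl)
    apply Finset.filter_congr
    intro σ₂ _
    simp only [hst']
  · intro s
    rw [lqnPsi, Finset.sum_mul_sum, ← Finset.sum_product']
    refine Finset.sum_nbij'
      (fun σ => if h : ∀ x, E x (σ x) then
        (Equiv.Perm.subtypePerm σ (fun x => (hiff σ h x).symm),
         Equiv.Perm.subtypePerm σ (fun x => not_congr (hiff σ h x).symm))
        else (1, 1))
      (fun x => Equiv.Perm.subtypeCongr x.1 x.2) ?_ ?_ ?_ ?_ ?_
    · -- hi : image lands in the product filter
      intro σ hσ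
      simp only [Finset.mem_filter, Finset.mem_univ, true_and] at hσ
      obtain ⟨hPM, hout⟩ := hσ
      beta_reduce; rw [dif_pos hPM, Finset.mem_product]
      constructor
      · simp only [Finset.mem_filter, Finset.mem_univ, true_and]
        refine ⟨fun a => ?_, fun j => ?_⟩
        · simpa [Equiv.Perm.subtypePerm_apply] using hPM a.1
        · simpa [Equiv.Perm.inv_subtypePerm, Equiv.Perm.subtypePerm_apply] using hout j.1
      · simp only [Finset.mem_filter, Finset.mem_univ, true_and]
        refine ⟨fun a => ?_, fun j => ?_⟩
        · simpa [Equiv.Perm.subtypePerm_apply] using hPM a.1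
        · simpa [Equiv.Perm.inv_subtypePerm, Equiv.Perm.subtypePerm_apply] using hout j.1
    · -- hj : subtypeCongr lands in the Ψ filter
      intro x hx
      rw [Finset.mem_product] at hx
      obtain ⟨hx1, hx2⟩ := hx
      simp only [Finset.mem_filter, Finset.mem_univ, true_and] at hx1 hx2
      obtain ⟨h1PM, h1out⟩ := hx1
      obtain ⟨h2PM, h2out⟩ := hx2
      simp only [Finset.mem_filter, Finset.mem_univ, true_and]
      refine ⟨fun a => ?_, fun j => ?_⟩
      · by_cases h : a ∈ S
        · rw [Equiv.Perm.subtypeCongr.left_apply _ _ h]; exact h1PM ⟨a, h⟩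
        · rw [Equiv.Perm.subtypeCongr.right_apply _ _ h]; exact h2PM ⟨a, h⟩
      · have hinv : (Equiv.Perm.subtypeCongr x.1 x.2)⁻¹ =
            Equiv.Perm.subtypeCongr x.1⁻¹ x.2⁻¹ := by
          exact Equiv.Perm.subtypeCongr.symm _ _
        rw [hinv]
        by_cases h : j ∈ S
        · rw [Equiv.Perm.subtypeCongr.left_apply _ _ h]; exact h1out ⟨j, h⟩
        · rw [Equiv.Perm.subtypeCongr.right_apply _ _ h]; exact h2out ⟨j, h⟩
    · -- left_inv
      intro σ hσ
      simp only [Finset.mem_filter, Finset.mem_univ, true_and] at hσ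
      beta_reduce; rw [dif_pos hσ.1]
      ext a
      by_cases h : a ∈ S
      · rw [Equiv.Perm.subtypeCongr.left_apply _ _ h, Equiv.Perm.subtypePerm_apply]
      · rw [Equiv.Perm.subtypeCongr.right_apply _ _ h, Equiv.Perm.subtypePerm_apply]
    · -- right_inv
      intro x hx
      rw [Finset.mem_product] at hx
      obtain ⟨hx1, hx2⟩ := hx
      simp only [Finset.mem_filter, Finset.mem_univ, true_and] at hx1 hx2
      have hE : ∀ a : Fin N, E a (Equiv.Perm.subtypeCongr x.1 x.2 a) := by
        intro a
        by_cases h : a ∈ S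
        · rw [Equiv.Perm.subtypeCongr.left_apply _ _ h]; exact hx1.1 ⟨a, h⟩
        · rw [Equiv.Perm.subtypeCongr.right_apply _ _ h]; exact hx2.1 ⟨a, h⟩
      beta_reduce; rw [dif_pos hE]
      refine Prod.ext ?_ ?_
      · ext a
        simp only [Equiv.Perm.subtypePerm_apply]
        rw [Equiv.Perm.subtypeCongr.left_apply _ _ a.2]
      · ext a
        simp only [Equiv.Perm.subtypePerm_apply]
        rw [Equiv.Perm.subtypeCongr.right_apply _ _ a.2]
    · -- values
      intro σ hσ
      simp only [Finset.mem_filter, Finset.mem_univ, true_and] at hσ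
      beta_reduce; rw [dif_pos hσ.1]
      rw [← Fintype.prod_subtype_mul_prod_subtype (fun x : Fin N => x ∈ S)
        (fun a => T a (σ a))]
      congr 1 <;> exact Finset.prod_congr rfl (fun a _ => by
        rw [Equiv.Perm.subtypePerm_apply])
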